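/- Let W be a standard Gaussian random variable, S ~ Exp(1) independent of W, and D ∈ (0, 1/2). Define f to be the density of √(2D)·λ^{1/2−D}·σ·S^{D−1/2}·W, where σ is a positive random variable independent of S, W with all moments finite. Then ∫ |x|^q f(x) dx < ∞ if and only if q < (1/2 − D)^{−1}. -/

import Mathlib

open MeasureTheory ProbabilityTheory Real Set

-- |x|^q * exp(-b x^2) is integrable on ℝ
lemma aux_abs_rpow_exp {b q : ℝ} (hb : 0 < b) (hq : -1 < q) :
    Integrable (fun x : ℝ => |x| ^ q * Real.exp (-b * x ^ 2)) := by
  have hIoi : IntegrableOn (fun x : ℝ => |x| ^ q * Real.exp (-b * x ^ 2)) (Ioi 0) := by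
    refine (integrableOn_rpow_mul_exp_neg_mul_sq hb hq).congr_fun ?_ measurableSet_Ioi
    intro x hx
    simp [abs_of_pos (mem_Ioi.mp hx)]
  rw [← integrableOn_univ, ← @Iio_union_Ici _ _ (0 : ℝ), integrableOn_union,
    integrableOn_Ici_iff_integrableOn_Ioi]
  refine ⟨?_, hIoi⟩
  rw [← (Measure.measurePreserving_neg (volume : Measure ℝ)).integrableOn_comp_preimage
      (Homeomorph.neg ℝ).measurableEmbedding]
  simpa [Function.comp_def, neg_preimage, neg_Iio, neg_zero, abs_neg] using hIoi

-- gaussian moments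
lemma aux_gauss_mom {q : ℝ} (hq : 0 < q) :
    Integrable (fun x : ℝ => |x| ^ q) (gaussianReal 0 1) := by
  rw [gaussianReal_of_var_ne_zero 0 one_ne_zero,
    integrable_withDensity_iff (measurable_gaussianPDF 0 1)
      (Filter.Eventually.of_forall fun _ => ENNReal.ofReal_lt_top)]
  have : ∀ x : ℝ, |x| ^ q * (gaussianPDF 0 1 x).toReal
      = (√(2 * π))⁻¹ * (|x| ^ q * Real.exp (-(1/2) * x ^ 2)) := by
    intro x
    rw [gaussianPDF, ENNReal.toReal_ofReal (gaussianPDFReal_nonneg _ _ _), gaussianPDFReal]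
    push_cast
    ring_nf
  simp_rw [this]
  exact (aux_abs_rpow_exp (by norm_num) (by linarith)).const_mul _

lemma aux_s_int {a q : ℝ} (h : -1 < q * a) :
    Integrable (fun s : ℝ => |s ^ a| ^ q)
      ((volume.restrict (Set.Ioi (0:ℝ))).withDensity
        (fun s => ENNReal.ofReal (Real.exp (-s)))) := by
  rw [integrable_withDensity_iff measurable_neg.exp.ennreal_ofReal
      (Filter.Eventually.of_forall fun _ => ENNReal.ofReal_lt_top)]
  have hG := Real.GammaIntegral_convergent (by linarith : 0 < q * a + 1)
  refine hG.congr ?_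
  filter_upwards [ae_restrict_mem measurableSet_Ioi] with s hs
  rw [ENNReal.toReal_ofReal (exp_nonneg _), abs_of_pos (Real.rpow_pos_of_pos hs a),
    ← Real.rpow_mul hs.le]
  have : q * a + 1 - 1 = a * q := by ring
  rw [this]; ring

lemma aux_s_not {a q : ℝ} (hq : 0 < q) (h : q * a ≤ -1) :
    ¬ Integrable (fun s : ℝ => |s ^ a| ^ q)
      ((volume.restrict (Set.Ioi (0:ℝ))).withDensity
        (fun s => ENNReal.ofReal (Real.exp (-s)))) := by
  intro hI
  rw [integrable_withDensity_iff measurable_neg.exp.ennreal_ofReal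
      (Filter.Eventually.of_forall fun _ => ENNReal.ofReal_lt_top)] at hI
  have h2 : IntegrableOn (fun s : ℝ => s ^ (q * a)) (Ioo (0:ℝ) 1) := by
    have hsm : AEStronglyMeasurable (fun s : ℝ => s ^ (q * a))
        (volume.restrict (Ioo (0:ℝ) 1)) := by
      have hm : Measurable (fun x : ℝ => Real.exp (Real.log x * (q * a))) :=
        (Real.measurable_log.mul measurable_const).exp
      refine hm.aestronglyMeasurable.congr ?_
      filter_upwards [ae_restrict_mem measurableSet_Ioo] with x hx
      rw [← Real.rpow_def_of_pos hx.1]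
    refine Integrable.mono'
      ((IntegrableOn.mono_set hI Ioo_subset_Ioi_self).const_mul (Real.exp 1)) hsm ?_
    filter_upwards [ae_restrict_mem measurableSet_Ioo] with s hs
    rw [Real.norm_eq_abs, abs_of_pos (Real.rpow_pos_of_pos hs.1 _),
      ENNReal.toReal_ofReal (exp_nonneg _), abs_of_pos (Real.rpow_pos_of_pos hs.1 a),
      ← Real.rpow_mul hs.1.le, mul_comm a q]
    have h1 : (1:ℝ) ≤ Real.exp 1 * Real.exp (-s) := by
      rw [← Real.exp_add]
      exact Real.one_le_exp (by linarith [hs.2])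
    nlinarith [Real.rpow_pos_of_pos hs.1 (q * a)]
  rw [intervalIntegral.integrableOn_Ioo_rpow_iff zero_lt_one] at h2
  linarith

theorem stmt_16 (D lam : ℝ) (hD0 : 0 < D) (hD : D < 1/2) (hlam : 0 < lam)
    (ν : Measure ℝ) [IsProbabilityMeasure ν]
    (hνpos : ν (Set.Ioi 0) = 1)
    (hνmom : ∀ r : ℝ, 0 < r → Integrable (fun x : ℝ => |x| ^ r) ν)
    (q : ℝ) (hq : 0 < q) :
    Integrable
      (fun p : ℝ × ℝ × ℝ =>
        |Real.sqrt (2 * D) * lam ^ (1/2 - D) * p.1 * p.2.1 ^ (D - 1/2) * p.2.2| ^ q)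
      (ν.prod
        (((volume.restrict (Set.Ioi (0:ℝ))).withDensity
            (fun s => ENNReal.ofReal (Real.exp (-s)))).prod
          (gaussianReal 0 1)))
    ↔ q < 1 / (1/2 - D) := by
  have hc : 0 < Real.sqrt (2 * D) * lam ^ (1/2 - D) :=
    mul_pos (Real.sqrt_pos.mpr (by linarith)) (Real.rpow_pos_of_pos hlam _)
  have hhalf : (0:ℝ) < 1/2 - D := by linarith
  have hfun : (fun p : ℝ × ℝ × ℝ =>
        |Real.sqrt (2 * D) * lam ^ (1/2 - D) * p.1 * p.2.1 ^ (D - 1/2) * p.2.2| ^ q)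
      = fun p => ((Real.sqrt (2 * D) * lam ^ (1/2 - D)) ^ q * |p.1| ^ q) *
          (|p.2.1 ^ (D - 1/2)| ^ q * |p.2.2| ^ q) := by
    funext p
    rw [abs_mul, abs_mul, abs_mul, abs_of_pos hc,
      Real.mul_rpow (by positivity) (abs_nonneg _),
      Real.mul_rpow (by positivity) (abs_nonneg _),
      Real.mul_rpow hc.le (abs_nonneg _)]
    ring
  rw [hfun]
  constructor
  · intro hI
    by_contra hn
    push_neg at hn
    have ha : q * (D - 1/2) ≤ -1 := by
      have h1 : 1 ≤ q * (1/2 - D) := by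
        rw [div_le_iff₀ hhalf] at hn
        linarith
      nlinarith
    have hσae : ∀ᵐ σ ∂ν, σ ∈ Ioi (0:ℝ) := by
      rw [ae_iff]
      have : ν (Set.Ioi (0:ℝ))ᶜ = 0 := by
        rw [measure_compl measurableSet_Ioi (measure_ne_top _ _), hνpos, measure_univ]
        simp
      exact this
    obtain ⟨σ0, hσ0pos, hσ0⟩ := (hσae.and hI.prod_right_ae).exists
    have hwae : ∀ᵐ w ∂(gaussianReal 0 1), w ≠ 0 := by
      rw [ae_iff]
      have h0 : (gaussianReal 0 1) {(0:ℝ)} = 0 :=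
        gaussianReal_absolutelyContinuous 0 one_ne_zero (by simp)
      simpa using h0
    obtain ⟨w0, hw0, hw1⟩ := (hwae.and hσ0.prod_left_ae).exists
    have hK : 0 < (Real.sqrt (2 * D) * lam ^ (1/2 - D)) ^ q * |σ0| ^ q * |w0| ^ q := by
      have : 0 < |σ0| := abs_pos.mpr (ne_of_gt hσ0pos)
      have : 0 < |w0| := abs_pos.mpr hw0
      positivity
    have hg : Integrable (fun s : ℝ => |s ^ (D - 1/2)| ^ q)
        ((volume.restrict (Set.Ioi (0:ℝ))).withDensity
          (fun s => ENNReal.ofReal (Real.exp (-s)))) := by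
      have h2 := hw1.const_mul
        ((Real.sqrt (2 * D) * lam ^ (1/2 - D)) ^ q * |σ0| ^ q * |w0| ^ q)⁻¹
      refine h2.congr (Filter.Eventually.of_forall fun s => ?_)
      show ((Real.sqrt (2 * D) * lam ^ (1/2 - D)) ^ q * |σ0| ^ q * |w0| ^ q)⁻¹ *
          ((Real.sqrt (2 * D) * lam ^ (1/2 - D)) ^ q * |σ0| ^ q *
            (|s ^ (D - 1/2)| ^ q * |w0| ^ q)) = |s ^ (D - 1/2)| ^ q
      rw [show (Real.sqrt (2 * D) * lam ^ (1/2 - D)) ^ q * |σ0| ^ q *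
            (|s ^ (D - 1/2)| ^ q * |w0| ^ q)
          = ((Real.sqrt (2 * D) * lam ^ (1/2 - D)) ^ q * |σ0| ^ q * |w0| ^ q) *
            |s ^ (D - 1/2)| ^ q from by ring, inv_mul_cancel_left₀ hK.ne']
    exact aux_s_not hq ha hg
  · intro hlt
    have ha : -1 < q * (D - 1/2) := by
      rw [lt_div_iff₀ hhalf] at hlt
      nlinarith
    exact ((hνmom q hq).const_mul _).mul_prod ((aux_s_int ha).mul_prod (aux_gauss_mom hq))
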